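/- Let p, q be coprime positive integers, n ≥ 2, p ≥ n, and define k by k + n = p/q. Given λ_1,…,λ_{n−1}, μ_1,…,μ_{n−1} ∈ ℤ_{≥0} with Σλ_i ≤ p − n and Σμ_i ≤ q − n (assuming q ≥ n), set b_i = Σ_{k=i}^{n−1} (λ_k − (p/q)(μ_k + 1)) for 1 ≤ i ≤ n−1 and b_n = 0. Then for all 1 ≤ i < j ≤ n, b_i − b_j ∉ ℤ. -/

import Mathlib

/-- Let `p, q` be coprime, `n ≥ 2`, `p, q ≥ n`, and
`λ_1,…,λ_{n-1}, μ_1,…,μ_{n-1} ∈ ℤ_{≥0}` (0-indexed here as `lam 0, …, lam (n-2)`) with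
`Σ λ_i ≤ p - n`, `Σ μ_i ≤ q - n`.  With `b_i = Σ_{k=i}^{n-2} (λ_k - (p/q)(μ_k + 1))`
(so `b_{n-1} = 0`), one has `b_i - b_j ∉ ℤ` for all `i < j ≤ n-1`. -/
theorem stmt_16 (p q n : ℕ) (hpq : Nat.Coprime p q) (hn : 2 ≤ n)
    (hp : n ≤ p) (hq : n ≤ q) (lam mu : ℕ → ℕ)
    (hl : (∑ k ∈ Finset.range (n - 1), lam k) ≤ p - n)
    (hm : (∑ k ∈ Finset.range (n - 1), mu k) ≤ q - n) :
    ∀ i j : ℕ, i < j → j ≤ n - 1 → ∀ z : ℤ,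
      (∑ k ∈ Finset.Ico i (n - 1), ((lam k : ℚ) - (p : ℚ) / q * (mu k + 1))) -
      (∑ k ∈ Finset.Ico j (n - 1), ((lam k : ℚ) - (p : ℚ) / q * (mu k + 1))) ≠ z := by
  intro i j hij hjn z hz
  have hij' : i ≤ j := hij.le
  have hq0 : 0 < q := lt_of_lt_of_le (by omega) hq
  -- combine sums
  have hsplit := Finset.sum_Ico_consecutive
    (fun k => ((lam k : ℚ) - (p : ℚ) / q * (mu k + 1))) hij' hjn
  have hz' : (∑ k ∈ Finset.Ico i j, ((lam k : ℚ) - (p : ℚ) / q * (mu k + 1))) = z := by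
    rw [← hsplit] at hz; linarith
  set S : ℕ := ∑ k ∈ Finset.Ico i j, (mu k + 1) with hS
  set A : ℕ := ∑ k ∈ Finset.Ico i j, lam k with hA
  have hsum : (A : ℚ) - (p : ℚ) / q * S = z := by
    rw [← hz']
    push_cast [hS, hA, Finset.sum_sub_distrib, Finset.mul_sum]
    ring
  -- bounds on S
  have hcard : S = (j - i) + ∑ k ∈ Finset.Ico i j, mu k := by
    simp [hS, Finset.sum_add_distrib, Nat.card_Ico, add_comm]
  have hSle : ∑ k ∈ Finset.Ico i j, mu k ≤ ∑ k ∈ Finset.range (n - 1), mu k := by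
    rw [Finset.range_eq_Ico]
    exact Finset.sum_le_sum_of_subset (Finset.Ico_subset_Ico (Nat.zero_le _) hjn)
  have hSpos : 0 < S := by omega
  have hSlt : S < q := by omega
  -- derive divisibility
  have hq0' : (q : ℚ) ≠ 0 := by positivity
  have key : (p * S : ℚ) = q * (A - z) := by
    field_simp at hsum
    push_cast
    linarith
  have keyZ : (p * S : ℤ) = q * (A - z) := by exact_mod_cast key
  have hdvd : (q : ℤ) ∣ (p : ℤ) * S := ⟨(A : ℤ) - z, keyZ⟩
  have hdvdS : (q : ℤ) ∣ (S : ℤ) := by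
    have : IsCoprime (q : ℤ) (p : ℤ) := by
      exact Nat.isCoprime_iff_coprime.mpr hpq.symm
    exact this.dvd_of_dvd_mul_left hdvd
  have : q ∣ S := Int.ofNat_dvd.mp hdvdS
  exact absurd (Nat.le_of_dvd hSpos this) (not_le.mpr hSlt)
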